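/- A non-empty bicategory is filtered if and only if it is pseudofiltered and connected. -/

import Mathlib

open CategoryTheory Bicategory

universe w v u w' v' u'

namespace Paper

/-- A pseudo-cocone of a pseudofunctor `F : C ⥤ B` with apex `E : B`. -/
structure PseudoCocone {C : Type u'} [Bicategory.{w', v'} C] {B : Type u} [Bicategory.{w, v} B]
    (F : Pseudofunctor C B) (E : B) where
  app (A : C) : F.obj A ⟶ E
  nat {A A' : C} (f : A ⟶ A') : F.map f ≫ app A' ≅ app A
  unity (A : C) :
    (nat (𝟙 A)).hom = ((F.mapId A).hom ▷ app A) ≫ (λ_ (app A)).hom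
  comp {A A' A'' : C} (f : A ⟶ A') (g : A' ⟶ A'') :
    (nat (f ≫ g)).hom =
      ((F.mapComp f g).hom ▷ app A'') ≫ (α_ (F.map f) (F.map g) (app A'')).hom ≫
        (F.map f ◁ (nat g).hom) ≫ (nat f).hom
  nat2 {A A' : C} {f g : A ⟶ A'} (γ : f ⟶ g) :
    (F.map₂ γ ▷ app A') ≫ (nat g).hom = (nat f).hom

/-- A bicategory is finite if it has finitely many objects, 1-cells and 2-cells. -/
def FiniteBicategory (C : Type u') [Bicategory.{w', v'} C] : Prop :=
  Finite C ∧ (∀ a b : C, Finite (a ⟶ b)) ∧ ∀ (a b : C) (f g : a ⟶ b), Finite (f ⟶ g)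

/-- A bicategory is connected if any two of its objects can be joined by a finite zigzag of
1-cells. -/
def ConnectedBicategory (C : Type u') [Bicategory.{w', v'} C] : Prop :=
  ∀ a b : C, Relation.ReflTransGen (fun x y : C => Nonempty (x ⟶ y) ∨ Nonempty (y ⟶ x)) a b

/-- A (non-empty) bicategory is filtered if every pseudofunctor from a finite bicategory
admits a pseudo-cocone. -/
def IsFiltered (B : Type u) [Bicategory.{w, v} B] : Prop :=
  ∀ (C : Type u') [Bicategory.{w', v'} C], FiniteBicategory C →
    ∀ F : Pseudofunctor C B, ∃ E : B, Nonempty (PseudoCocone F E)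

/-- A (non-empty) bicategory is pseudofiltered if every pseudofunctor from a finite connected
bicategory admits a pseudo-cocone. -/
def IsPseudofiltered (B : Type u) [Bicategory.{w, v} B] : Prop :=
  ∀ (C : Type u') [Bicategory.{w', v'} C], FiniteBicategory C → ConnectedBicategory C →
    ∀ F : Pseudofunctor C B, ∃ E : B, Nonempty (PseudoCocone F E)

/-! ### Thin shape bicategories -/

theorem zext {p : Prop} {x y : ULift.{s} (PLift p)} : x = y := by
  cases x with | up x => cases y with | up y => cases x; cases y; rfl

instance zcat (p : Prop) : Category.{w'} (ULift.{v'} (PLift p)) where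
  Hom f g := ULift.{w'} (PLift (f = g))
  id _ := ⟨⟨rfl⟩⟩
  comp p q := ⟨⟨p.down.down.trans q.down.down⟩⟩
  id_comp _ := zext
  comp_id _ := zext
  assoc _ _ _ := zext

def z2 {p : Prop} (x y : ULift.{v'} (PLift p)) : x ⟶ y := ⟨⟨zext⟩⟩

def ziso {p : Prop} (x y : ULift.{v'} (PLift p)) : x ≅ y := ⟨z2 x y, z2 y x, zext, zext⟩

/-- objects of a thin shape bicategory for relation `r` -/
structure ZObj {α : Type u'} (r : α → α → Prop) : Type u' where base : α

section ZObj

variable {α : Type u'} {r : α → α → Prop} [IsRefl α r] [IsTrans α r]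

instance : Bicategory.{w', v'} (ZObj r) where
  Hom a b := ULift.{v'} (PLift (r a.base b.base))
  id a := ⟨⟨refl_of r a.base⟩⟩
  comp f g := ⟨⟨Trans.trans f.down.down g.down.down⟩⟩
  homCategory a b := zcat _
  whiskerLeft f g h η := z2 _ _
  whiskerRight η h := z2 _ _
  associator f g h := ziso _ _
  leftUnitor f := ziso _ _
  rightUnitor f := ziso _ _
  whiskerLeft_id := by intros; exact zext
  whiskerLeft_comp := by intros; exact zext
  id_whiskerLeft := by intros; exact zext
  comp_whiskerLeft := by intros; exact zext
  id_whiskerRight := by intros; exact zext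
  comp_whiskerRight := by intros; exact zext
  whiskerRight_id := by intros; exact zext
  whiskerRight_comp := by intros; exact zext
  whisker_assoc := by intros; exact zext
  whisker_exchange := by intros; exact zext
  pentagon := by intros; exact zext
  triangle := by intros; exact zext

theorem zhom_def (a b : ZObj r) : (a ⟶ b) = ULift.{v'} (PLift (r a.base b.base)) := rfl

theorem zfin (hα : Finite α) : FiniteBicategory.{w', v', u'} (ZObj r) := by
  refine ⟨?_, fun a b => ?_, fun a b f g => ?_⟩
  · exact Finite.of_equiv α ⟨fun a => ⟨a⟩, fun a => a.base, fun _ => rfl, fun _ => rfl⟩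
  · exact inferInstanceAs (Finite (ULift (PLift _)))
  · exact inferInstanceAs (Finite (ULift (PLift _)))

end ZObj

/-! ### The span shape -/

inductive Sp3 : Type u' | l | m | r

instance : DecidableEq Sp3.{u'} := fun a b => by
  cases a <;> cases b <;> first | exact isTrue rfl | exact isFalse (fun h => Sp3.noConfusion h)

def spR : Sp3.{u'} → Sp3.{u'} → Prop := fun a b => a = .m ∨ a = b

instance : IsRefl Sp3.{u'} spR := ⟨fun _ => Or.inr rfl⟩
instance : IsTrans Sp3.{u'} spR :=
  ⟨fun a b c h₁ h₂ => by
    rcases h₁ with h | h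
    · exact Or.inl h
    · subst h; exact h₂⟩

instance (a b : Sp3.{u'}) : Decidable (spR a b) :=
  inferInstanceAs (Decidable (_ ∨ _))

instance : Finite Sp3.{u'} :=
  Finite.of_injective (fun x : Sp3 => (match x with | .l => 0 | .m => 1 | .r => 2 : Fin 3))
    (by rintro ⟨⟩ ⟨⟩ h <;> simp_all)

abbrev SpanCat := ZObj spR.{u'}

theorem span_connected : ConnectedBicategory.{w', v', u'} SpanCat.{u'} := by
  intro a b
  exact Relation.ReflTransGen.tail (b := ⟨.m⟩)
    (Relation.ReflTransGen.single (Or.inr ⟨⟨⟨Or.inl rfl⟩⟩⟩)) (Or.inl ⟨⟨⟨Or.inl rfl⟩⟩⟩)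

section Span

variable {B : Type u} [Bicategory.{w, v} B] {x y z : B} (f : x ⟶ y) (g : x ⟶ z)

def sobj (x y z : B) : Sp3.{u'} → B
  | .l => y
  | .m => x
  | .r => z

def smap : ∀ a b : Sp3.{u'}, spR a b → ((sobj x y z a) ⟶ sobj x y z b)
  | .m, .m, _ => 𝟙 x
  | .m, .l, _ => f
  | .m, .r, _ => g
  | .l, .l, _ => 𝟙 y
  | .r, .r, _ => 𝟙 z
  | .l, .m, h => absurd h (by rintro (h | h) <;> exact Sp3.noConfusion h)
  | .l, .r, h => absurd h (by rintro (h | h) <;> exact Sp3.noConfusion h)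
  | .r, .l, h => absurd h (by rintro (h | h) <;> exact Sp3.noConfusion h)
  | .r, .m, h => absurd h (by rintro (h | h) <;> exact Sp3.noConfusion h)

def smapId : ∀ (a : Sp3.{u'}) (h : spR a a), smap f g a a h ≅ 𝟙 (sobj x y z a)
  | .l, _ => Iso.refl _
  | .m, _ => Iso.refl _
  | .r, _ => Iso.refl _

def smapComp : ∀ (a b c : Sp3.{u'}) (h₁ : spR a b) (h₂ : spR b c) (h₃ : spR a c),
    smap f g a c h₃ ≅ smap f g a b h₁ ≫ smap f g b c h₂
  | .m, .m, .m, _, _, _ => (λ_ (𝟙 x)).symm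
  | .m, .m, .l, _, _, _ => (λ_ f).symm
  | .m, .m, .r, _, _, _ => (λ_ g).symm
  | .m, .l, .l, _, _, _ => (ρ_ f).symm
  | .m, .r, .r, _, _, _ => (ρ_ g).symm
  | .l, .l, .l, _, _, _ => (λ_ (𝟙 y)).symm
  | .r, .r, .r, _, _, _ => (λ_ (𝟙 z)).symm
  | .l, .m, _, h, _, _ => absurd h (by decide)
  | .l, .r, _, h, _, _ => absurd h (by decide)
  | .r, .m, _, h, _, _ => absurd h (by decide)
  | .r, .l, _, h, _, _ => absurd h (by decide)
  | .m, .l, .m, _, h, _ => absurd h (by decide)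
  | .m, .l, .r, _, h, _ => absurd h (by decide)
  | .m, .r, .m, _, h, _ => absurd h (by decide)
  | .m, .r, .l, _, h, _ => absurd h (by decide)
  | .l, .l, .m, _, h, _ => absurd h (by decide)
  | .l, .l, .r, _, h, _ => absurd h (by decide)
  | .r, .r, .m, _, h, _ => absurd h (by decide)
  | .r, .r, .l, _, h, _ => absurd h (by decide)

def spanPseudo : Pseudofunctor SpanCat.{u'} B where
  obj a := sobj x y z a.base
  map {a b} h := smap f g a.base b.base h.down.down
  map₂ {a b} {F G} η := 𝟙 _
  map₂_id := by intros; rfl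
  map₂_comp := by intros; simp
  mapId a := smapId f g a.base _
  mapComp {a b c} F G := smapComp f g a.base b.base c.base F.down.down G.down.down _
  map₂_whisker_left := by
    rintro ⟨a⟩ ⟨b⟩ ⟨c⟩ p q q' η
    obtain rfl : q = q' := zext
    simp
  map₂_whisker_right := by
    rintro ⟨a⟩ ⟨b⟩ ⟨c⟩ p p' η q
    obtain rfl : p = p' := zext
    simp
  map₂_associator := by
    rintro ⟨a⟩ ⟨b⟩ ⟨c⟩ ⟨d⟩ p q s
    have hp := p.down.down; have hq := q.down.down; have hs := s.down.down
    cases a <;> cases b <;> cases c <;> cases d <;>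
      first
        | exact absurd hp (by decide)
        | exact absurd hq (by decide)
        | exact absurd hs (by decide)
        | (simp [smap, smapComp, sobj]; try bicategory_coherence)
  map₂_left_unitor := by
    rintro ⟨a⟩ ⟨b⟩ p
    have hp := p.down.down
    cases a <;> cases b <;>
      first
        | exact absurd hp (by decide)
        | (simp [smap, smapComp, smapId, sobj]; try bicategory_coherence)
  map₂_right_unitor := by
    rintro ⟨a⟩ ⟨b⟩ p
    have hp := p.down.down
    cases a <;> cases b <;>
      first
        | exact absurd hp (by decide)
        | (simp [smap, smapComp, smapId, sobj]; try bicategory_coherence)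

end Span

end Paper

namespace Paper

theorem spanBound {B : Type u} [Bicategory.{w, v} B]
    (hpf : IsPseudofiltered.{w, v, u, w', v', u'} B) {x y z : B} (f : x ⟶ y) (g : x ⟶ z) :
    ∃ E : B, Nonempty (y ⟶ E) ∧ Nonempty (z ⟶ E) := by
  obtain ⟨E, ⟨θ⟩⟩ := hpf SpanCat.{u'} (zfin inferInstance) span_connected (spanPseudo f g)
  exact ⟨E, ⟨θ.app ⟨.l⟩⟩, ⟨θ.app ⟨.r⟩⟩⟩

theorem bound2 {B : Type u} [Bicategory.{w, v} B]
    (hpf : IsPseudofiltered.{w, v, u, w', v', u'} B) (hconn : ConnectedBicategory B)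
    (x y : B) : ∃ E : B, Nonempty (x ⟶ E) ∧ Nonempty (y ⟶ E) := by
  have h := hconn x y
  induction h with
  | refl => exact ⟨x, ⟨𝟙 x⟩, ⟨𝟙 x⟩⟩
  | tail hab step ih =>
    obtain ⟨z, ⟨u⟩, ⟨v⟩⟩ := ih
    rcases step with h | h
    · obtain ⟨e⟩ := h
      obtain ⟨w, ⟨p⟩, ⟨q⟩⟩ := spanBound.{w, v, u, w', v', u'} hpf e v
      exact ⟨w, ⟨u ≫ q⟩, ⟨p⟩⟩
    · obtain ⟨e⟩ := h
      exact ⟨z, ⟨u⟩, ⟨e ≫ v⟩⟩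

/-! ### The discrete pair shape -/

inductive Pr2 : Type u' | a | b

instance : DecidableEq Pr2.{u'} := fun x y => by
  cases x <;> cases y <;> first | exact isTrue rfl | exact isFalse (fun h => Pr2.noConfusion h)

def prR : Pr2.{u'} → Pr2.{u'} → Prop := fun x y => x = y

instance : IsRefl Pr2.{u'} prR := ⟨fun _ => rfl⟩
instance : IsTrans Pr2.{u'} prR := ⟨fun _ _ _ h₁ h₂ => h₁.trans h₂⟩
instance (x y : Pr2.{u'}) : Decidable (prR x y) := inferInstanceAs (Decidable (_ = _))

instance : Finite Pr2.{u'} :=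
  Finite.of_injective (fun x : Pr2 => (match x with | .a => 0 | .b => 1 : Fin 2))
    (by rintro ⟨⟩ ⟨⟩ h <;> simp_all)

abbrev PairCat := ZObj prR.{u'}

section Pair

variable {B : Type u} [Bicategory.{w, v} B] (x y : B)

def pobj : Pr2.{u'} → B
  | .a => x
  | .b => y

def pmap : ∀ s t : Pr2.{u'}, prR s t → (pobj x y s ⟶ pobj x y t)
  | .a, .a, _ => 𝟙 x
  | .b, .b, _ => 𝟙 y
  | .a, .b, h => absurd h (by decide)
  | .b, .a, h => absurd h (by decide)

def pmapId : ∀ (s : Pr2.{u'}) (h : prR s s), pmap x y s s h ≅ 𝟙 (pobj x y s)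
  | .a, _ => Iso.refl _
  | .b, _ => Iso.refl _

def pmapComp : ∀ (s t r : Pr2.{u'}) (h₁ : prR s t) (h₂ : prR t r) (h₃ : prR s r),
    pmap x y s r h₃ ≅ pmap x y s t h₁ ≫ pmap x y t r h₂
  | .a, .a, .a, _, _, _ => (λ_ (𝟙 x)).symm
  | .b, .b, .b, _, _, _ => (λ_ (𝟙 y)).symm
  | .a, .b, _, h, _, _ => absurd h (by decide)
  | .b, .a, _, h, _, _ => absurd h (by decide)
  | .a, .a, .b, _, h, _ => absurd h (by decide)
  | .b, .b, .a, _, h, _ => absurd h (by decide)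

def pairPseudo : Pseudofunctor PairCat.{u'} B where
  obj s := pobj x y s.base
  map {s t} h := pmap x y s.base t.base h.down.down
  map₂ {s t} {F G} η := 𝟙 _
  map₂_id := by intros; rfl
  map₂_comp := by intros; simp
  mapId s := pmapId x y s.base _
  mapComp {s t r} F G := pmapComp x y s.base t.base r.base F.down.down G.down.down _
  map₂_whisker_left := by
    rintro ⟨s⟩ ⟨t⟩ ⟨r⟩ p q q' η
    obtain rfl : q = q' := zext
    simp
  map₂_whisker_right := by
    rintro ⟨s⟩ ⟨t⟩ ⟨r⟩ p p' η q
    obtain rfl : p = p' := zext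
    simp
  map₂_associator := by
    rintro ⟨s⟩ ⟨t⟩ ⟨r⟩ ⟨o⟩ p q e
    have hp := p.down.down; have hq := q.down.down; have he := e.down.down
    cases s <;> cases t <;> cases r <;> cases o <;>
      first
        | exact absurd hp (by decide)
        | exact absurd hq (by decide)
        | exact absurd he (by decide)
        | (simp [pmap, pmapComp, pobj]; try bicategory_coherence)
  map₂_left_unitor := by
    rintro ⟨s⟩ ⟨t⟩ p
    have hp := p.down.down
    cases s <;> cases t <;>
      first
        | exact absurd hp (by decide)
        | (simp [pmap, pmapComp, pmapId, pobj]; try bicategory_coherence)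
  map₂_right_unitor := by
    rintro ⟨s⟩ ⟨t⟩ p
    have hp := p.down.down
    cases s <;> cases t <;>
      first
        | exact absurd hp (by decide)
        | (simp [pmap, pmapComp, pmapId, pobj]; try bicategory_coherence)

end Pair

theorem connected_of_filtered {B : Type u} [Bicategory.{w, v} B]
    (hfil : IsFiltered.{w, v, u, w', v', u'} B) : ConnectedBicategory B := by
  intro x y
  obtain ⟨E, ⟨θ⟩⟩ := hfil PairCat.{u'} (zfin inferInstance) (pairPseudo x y)
  exact Relation.ReflTransGen.tail (b := E)
    (Relation.ReflTransGen.single (Or.inl ⟨θ.app ⟨.a⟩⟩)) (Or.inr ⟨θ.app ⟨.b⟩⟩)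

end Paper

namespace Paper

/-! ### Full sub-bicategories -/

section Sub

variable {C : Type u'} [Bicategory.{w', v'} C] (P : C → Prop)

instance subBicategory : Bicategory.{w', v'} {c : C // P c} where
  Hom a b := a.1 ⟶ b.1
  id a := 𝟙 a.1
  comp f g := f ≫ g
  homCategory a b := inferInstanceAs (Category (a.1 ⟶ b.1))
  whiskerLeft f g h η := f ◁ η
  whiskerRight η h := η ▷ h
  associator f g h := α_ f g h
  leftUnitor f := λ_ f
  rightUnitor f := ρ_ f
  whiskerLeft_id := by intros; exact Bicategory.whiskerLeft_id _ _
  whiskerLeft_comp := by intros; exact Bicategory.whiskerLeft_comp _ _ _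
  id_whiskerLeft := by intros; exact Bicategory.id_whiskerLeft _
  comp_whiskerLeft := by intros; exact Bicategory.comp_whiskerLeft _ _ _
  id_whiskerRight := by intros; exact Bicategory.id_whiskerRight _ _
  comp_whiskerRight := by intros; exact Bicategory.comp_whiskerRight _ _ _
  whiskerRight_id := by intros; exact Bicategory.whiskerRight_id _
  whiskerRight_comp := by intros; exact Bicategory.whiskerRight_comp _ _ _
  whisker_assoc := by intros; exact Bicategory.whisker_assoc _ _ _
  whisker_exchange := by intros; exact Bicategory.whisker_exchange _ _
  pentagon := by intros; exact Bicategory.pentagon _ _ _ _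
  triangle := by intros; exact Bicategory.triangle _ _

theorem subFinite (h : FiniteBicategory.{w', v', u'} C) :
    FiniteBicategory.{w', v', u'} {c : C // P c} := by
  obtain ⟨h₁, h₂, h₃⟩ := h
  exact ⟨@Subtype.finite _ h₁ _, fun a b => h₂ a.1 b.1, fun a b f g => h₃ a.1 b.1 f g⟩

variable {B : Type u} [Bicategory.{w, v} B] (F : Pseudofunctor C B)

/-- Restriction of a pseudofunctor to a full sub-bicategory. -/
def restrictP : Pseudofunctor {c : C // P c} B where
  obj a := F.obj a.1
  map := F.map
  map₂ := F.map₂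
  map₂_id := fun f => F.map₂_id f
  map₂_comp := fun η θ => F.map₂_comp η θ
  mapId a := F.mapId a.1
  mapComp := fun f g => F.mapComp f g
  map₂_whisker_left := by intros; exact F.map₂_whisker_left _ _
  map₂_whisker_right := by intros; exact F.map₂_whisker_right _ _
  map₂_associator := by intros; exact F.map₂_associator _ _ _
  map₂_left_unitor := by intros; exact F.map₂_left_unitor _
  map₂_right_unitor := by intros; exact F.map₂_right_unitor _

end Sub

/-! ### Whiskering a pseudo-cocone by a 1-cell -/

def PseudoCocone.whisker {C : Type u'} [Bicategory.{w', v'} C] {B : Type u}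
    [Bicategory.{w, v} B] {F : Pseudofunctor C B} {E E' : B}
    (θ : PseudoCocone F E) (e : E ⟶ E') : PseudoCocone F E' where
  app A := θ.app A ≫ e
  nat {A A'} f := (α_ _ _ _).symm ≪≫ whiskerRightIso (θ.nat f) e
  unity A := by
    simp [θ.unity A, comp_whiskerRight]
  comp f g := by
    simp [θ.comp f g, comp_whiskerRight]
  nat2 γ := by
    have h := θ.nat2 γ
    simp [← h, comp_whiskerRight]

end Paper

namespace Paper

section GlueAux

variable {B : Type u} [Bicategory.{w, v} B]

theorem unity_aux {X E : B} (u : X ⟶ X) (ι : u ⟶ 𝟙 X) {a b : X ⟶ E} (q : a = b)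
    {κ : u ≫ b ⟶ b} (hκ : κ = (ι ▷ b) ≫ (λ_ b).hom) :
    u ◁ eqToHom q ≫ κ ≫ eqToHom q.symm = (ι ▷ a) ≫ (λ_ a).hom := by
  subst q; subst hκ; simp

theorem comp_aux {X Y Z E : B} (u : X ⟶ Y) (v : Y ⟶ Z) (uv : X ⟶ Z) (c : uv ⟶ u ≫ v)
    {a : X ⟶ E} {b : X ⟶ E} {a' : Y ⟶ E} {b' : Y ⟶ E} {a'' : Z ⟶ E} {b'' : Z ⟶ E}
    (q : a = b) (q' : a' = b') (q'' : a'' = b'')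
    {κfg : uv ≫ b'' ⟶ b} {κg : v ≫ b'' ⟶ b'} {κf : u ≫ b' ⟶ b}
    (hκ : κfg = (c ▷ b'') ≫ (α_ u v b'').hom ≫ (u ◁ κg) ≫ κf) :
    uv ◁ eqToHom q'' ≫ κfg ≫ eqToHom q.symm =
      (c ▷ a'') ≫ (α_ u v a'').hom ≫
        (u ◁ (v ◁ eqToHom q'' ≫ κg ≫ eqToHom q'.symm)) ≫
        (u ◁ eqToHom q' ≫ κf ≫ eqToHom q.symm) := by
  subst q; subst q'; subst q''; subst hκ; simp

theorem nat2_aux {X Y E : B} {u u' : X ⟶ Y} (γ : u ⟶ u')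
    {a : X ⟶ E} {b : X ⟶ E} {a' : Y ⟶ E} {b' : Y ⟶ E} (q : a = b) (q' : a' = b')
    {κg : u' ≫ b' ⟶ b} {κf : u ≫ b' ⟶ b} (hκ : (γ ▷ b') ≫ κg = κf) :
    (γ ▷ a') ≫ (u' ◁ eqToHom q' ≫ κg ≫ eqToHom q.symm) =
      u ◁ eqToHom q' ≫ κf ≫ eqToHom q.symm := by
  subst q; subst q'; subst hκ
  simp [← whisker_exchange_assoc]

end GlueAux

section Glue

variable {C : Type u'} [Bicategory.{w', v'} C] {B : Type u} [Bicategory.{w, v} B]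
  (F : Pseudofunctor C B) {E : B}

section helpers

variable (Q : C → Prop) (θ : PseudoCocone (restrictP Q F) E)

theorem sub_unity (A : C) (h h' : Q A) :
    (θ.nat (A := ⟨A, h⟩) (A' := ⟨A, h'⟩) (𝟙 A)).hom
      = ((F.mapId A).hom ▷ θ.app ⟨A, h'⟩) ≫ (λ_ (θ.app ⟨A, h'⟩)).hom :=
  θ.unity ⟨A, h⟩

theorem sub_comp {A A' A'' : C} (f : A ⟶ A') (g : A' ⟶ A'')
    (h : Q A) (h' : Q A') (h'' : Q A'') :
    (θ.nat (A := ⟨A, h⟩) (A' := ⟨A'', h''⟩) (show A ⟶ A'' from f ≫ g)).hom =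
      ((F.mapComp f g).hom ▷ θ.app ⟨A'', h''⟩) ≫
        (α_ (F.map f) (F.map g) (θ.app ⟨A'', h''⟩)).hom ≫
        (F.map f ◁ (θ.nat (A := ⟨A', h'⟩) (A' := ⟨A'', h''⟩) g).hom) ≫
        (θ.nat (A := ⟨A, h⟩) (A' := ⟨A', h'⟩) f).hom :=
  θ.comp (A := ⟨A, h⟩) (A' := ⟨A', h'⟩) (A'' := ⟨A'', h''⟩) f g

theorem sub_nat2 {A A' : C} {f g : A ⟶ A'} (γ : f ⟶ g) (h : Q A) (h' : Q A') :
    (F.map₂ γ ▷ θ.app ⟨A', h'⟩) ≫ (θ.nat (A := ⟨A, h⟩) (A' := ⟨A', h'⟩) g).hom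
      = (θ.nat (A := ⟨A, h⟩) (A' := ⟨A', h'⟩) f).hom :=
  θ.nat2 (A := ⟨A, h⟩) (A' := ⟨A', h'⟩) γ

end helpers

variable (P : C → Prop) [DecidablePred P]
  (θ₁ : PseudoCocone (restrictP P F) E)
  (θ₂ : PseudoCocone (restrictP (fun c => ¬ P c) F) E)
  (hP : ∀ {A A' : C}, (A ⟶ A') → (P A ↔ P A'))

def glueApp (A : C) : F.obj A ⟶ E :=
  if h : P A then θ₁.app ⟨A, h⟩ else θ₂.app ⟨A, h⟩

theorem glueApp_pos {A : C} (h : P A) : glueApp F P θ₁ θ₂ A = θ₁.app ⟨A, h⟩ := dif_pos h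

theorem glueApp_neg {A : C} (h : ¬ P A) : glueApp F P θ₁ θ₂ A = θ₂.app ⟨A, h⟩ := dif_neg h

def glue : PseudoCocone F E where
  app A := glueApp F P θ₁ θ₂ A
  nat {A A'} f :=
    if h : P A then
      whiskerLeftIso (F.map f) (eqToIso (glueApp_pos F P θ₁ θ₂ ((hP f).mp h)))
        ≪≫ θ₁.nat (A := ⟨A, h⟩) (A' := ⟨A', (hP f).mp h⟩) f
        ≪≫ (eqToIso (glueApp_pos F P θ₁ θ₂ h)).symm
    else
      whiskerLeftIso (F.map f) (eqToIso (glueApp_neg F P θ₁ θ₂ (fun h' => h ((hP f).mpr h'))))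
        ≪≫ θ₂.nat (A := ⟨A, h⟩) (A' := ⟨A', fun h' => h ((hP f).mpr h')⟩) f
        ≪≫ (eqToIso (glueApp_neg F P θ₁ θ₂ h)).symm
  unity A := by
    by_cases h : P A
    · simp only [dif_pos h]
      exact unity_aux (F.map (𝟙 A)) (F.mapId A).hom
        (glueApp_pos F P θ₁ θ₂ ((hP (𝟙 A)).mp h))
        (sub_unity F P θ₁ A h ((hP (𝟙 A)).mp h))
    · simp only [dif_neg h]
      exact unity_aux (F.map (𝟙 A)) (F.mapId A).hom
        (glueApp_neg F P θ₁ θ₂ (fun h' => h ((hP (𝟙 A)).mpr h')))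
        (sub_unity F (fun c => ¬ P c) θ₂ A h (fun h' => h ((hP (𝟙 A)).mpr h')))
  comp {A A' A''} f g := by
    by_cases h : P A
    · have h' : P A' := (hP f).mp h
      have h'' : P A'' := (hP g).mp h'
      simp only [dif_pos h, dif_pos h']
      exact comp_aux (F.map f) (F.map g) (F.map (f ≫ g)) (F.mapComp f g).hom
        (glueApp_pos F P θ₁ θ₂ h) (glueApp_pos F P θ₁ θ₂ h') (glueApp_pos F P θ₁ θ₂ h'')
        (sub_comp F P θ₁ f g h h' h'')
    · have h' : ¬ P A' := fun hh => h ((hP f).mpr hh)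
      have h'' : ¬ P A'' := fun hh => h' ((hP g).mpr hh)
      simp only [dif_neg h, dif_neg h']
      exact comp_aux (F.map f) (F.map g) (F.map (f ≫ g)) (F.mapComp f g).hom
        (glueApp_neg F P θ₁ θ₂ h) (glueApp_neg F P θ₁ θ₂ h') (glueApp_neg F P θ₁ θ₂ h'')
        (sub_comp F (fun c => ¬ P c) θ₂ f g h h' h'')
  nat2 {A A'} {f g} γ := by
    by_cases h : P A
    · have h' : P A' := (hP f).mp h
      simp only [dif_pos h]
      exact nat2_aux (F.map₂ γ)
        (glueApp_pos F P θ₁ θ₂ h) (glueApp_pos F P θ₁ θ₂ h')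
        (sub_nat2 F P θ₁ γ h h')
    · have h' : ¬ P A' := fun hh => h ((hP f).mpr hh)
      simp only [dif_neg h]
      exact nat2_aux (F.map₂ γ)
        (glueApp_neg F P θ₁ θ₂ h) (glueApp_neg F P θ₁ θ₂ h')
        (sub_nat2 F (fun c => ¬ P c) θ₂ γ h h')

end Glue

end Paper

namespace Paper

section Main

variable {B : Type u} [Bicategory.{w, v} B]

theorem cocone_exists (hpf : IsPseudofiltered.{w, v, u, w', v', u'} B) 
    (hconn : ConnectedBicategory B) :
    ∀ (n : ℕ) (C : Type u') (instC : Bicategory.{w', v'} C), FiniteBicategory C →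
      Nat.card C ≤ n → ∀ F : Pseudofunctor C B, ∃ E : B, Nonempty (PseudoCocone F E) := by
  intro n
  induction n using Nat.strong_induction_on with
  | _ n ih =>
    intro C instC hfin hcard F
    by_cases hc : ConnectedBicategory C
    · exact hpf C hfin hc F
    · simp only [ConnectedBicategory, not_forall] at hc
      obtain ⟨a, b, hab⟩ := hc
      classical
      set P : C → Prop := fun x =>
        Relation.ReflTransGen (fun x y : C => Nonempty (x ⟶ y) ∨ Nonempty (y ⟶ x)) a x with hPdef
      have hP : ∀ {A A' : C}, (A ⟶ A') → (P A ↔ P A') := by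
        intro A A' f
        constructor
        · exact fun h => h.tail (Or.inl ⟨f⟩)
        · exact fun h => h.tail (Or.inr ⟨f⟩)
      have hPa : P a := Relation.ReflTransGen.refl
      have hPb : ¬ P b := hab
      haveI : Finite C := hfin.1
      have hlt₁ : Nat.card {c : C // P c} < Nat.card C := Finite.card_subtype_lt hPb
      have hlt₂ : Nat.card {c : C // ¬ P c} < Nat.card C := Finite.card_subtype_lt (not_not_intro hPa)
      obtain ⟨E₁, ⟨θ₁'⟩⟩ := ih (Nat.card {c : C // P c}) (lt_of_lt_of_le hlt₁ hcard)
        {c : C // P c} (subBicategory P) (subFinite P hfin) le_rfl (restrictP P F)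
      obtain ⟨E₂, ⟨θ₂'⟩⟩ := ih (Nat.card {c : C // ¬ P c}) (lt_of_lt_of_le hlt₂ hcard)
        {c : C // ¬ P c} (subBicategory _) (subFinite _ hfin) le_rfl
        (restrictP (fun c => ¬ P c) F)
      obtain ⟨E, ⟨e₁⟩, ⟨e₂⟩⟩ := bound2.{w, v, u, w', v', u'} hpf hconn E₁ E₂
      exact ⟨E, ⟨glue F P (θ₁'.whisker e₁) (θ₂'.whisker e₂) hP⟩⟩

end Main

/-- A non-empty bicategory is filtered if and only if it is pseudofiltered and connected. -/
theorem filtered_iff_pseudofiltered_and_connected (B : Type u) [Bicategory.{w, v} B]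
    [Nonempty B] :
    IsFiltered.{w, v, u, w', v', u'} B ↔
      IsPseudofiltered.{w, v, u, w', v', u'} B ∧ ConnectedBicategory B := by
  constructor
  · intro hfil
    exact ⟨fun C _ hfin _ F => hfil C hfin F, connected_of_filtered.{w, v, u, w', v', u'} hfil⟩
  · rintro ⟨hpf, hconn⟩
    intro C instC hfin F
    exact cocone_exists.{w, v, u, w', v', u'} hpf hconn (Nat.card C) C instC hfin le_rfl F

end Paper
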